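/- Let n be an even positive integer, let r ≥ 1 be an integer, and set d = gcd(n, r). Then [2d]_q divides the Gaussian binomial coefficient [2n−2r choose n−1]_q in the polynomial ring ℤ[q]. -/

import Mathlib

open Polynomial

/-- The q-integer `[n]_q = 1 + q + ⋯ + q^{n−1}` as a polynomial in `ℤ[q]`
(with `[0]_q = 0`). -/
noncomputable def qIntP (n : ℕ) : Polynomial ℤ := ∑ i ∈ Finset.range n, Polynomial.X ^ i

/-- The q-factorial `[n]_q! = [1]_q[2]_q⋯[n]_q` in `ℤ[q]`. -/
noncomputable def qFactP (n : ℕ) : Polynomial ℤ := ∏ i ∈ Finset.range n, qIntP (i + 1)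

/-- The Gaussian binomial coefficient `[m choose k]_q = [m]_q!/([k]_q![m−k]_q!)`
as a polynomial in `ℤ[q]` (the division, by a monic polynomial, is exact),
and `0` if `k > m`. -/
noncomputable def qBinomP (m k : ℕ) : Polynomial ℤ :=
  if k ≤ m then qFactP m /ₘ (qFactP k * qFactP (m - k)) else 0

/-- The Gaussian binomial coefficient `[m choose k]_{q²}`, i.e. `[m choose k]_q`
with `q` replaced by `q²`. -/
noncomputable def qBinomP2 (m k : ℕ) : Polynomial ℤ := (qBinomP m k).comp (Polynomial.X ^ 2)

/-! ### Auxiliary lemmas -/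

lemma qIntP_mul_X_sub_one (n : ℕ) : qIntP n * (X - 1) = X ^ n - 1 := geom_sum_mul X n

lemma qIntP_monic {n : ℕ} (hn : 0 < n) : (qIntP n).Monic := monic_geom_sum_X hn.ne'

lemma qFactP_monic (n : ℕ) : (qFactP n).Monic :=
  monic_prod_of_monic _ _ fun i _ => qIntP_monic (Nat.succ_pos i)

lemma qIntP_dvd {a b : ℕ} (h : a ∣ b) : qIntP a ∣ qIntP b := by
  rcases Nat.eq_zero_or_pos a with rfl | ha
  · obtain rfl : b = 0 := Nat.eq_zero_of_zero_dvd h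
    exact dvd_rfl
  · obtain ⟨c, rfl⟩ := h
    have h1 : (X : ℤ[X]) ^ a - 1 ∣ X ^ (a * c) - 1 := by
      have := sub_dvd_pow_sub_pow ((X : ℤ[X]) ^ a) 1 c
      simpa [← pow_mul] using this
    obtain ⟨t, ht⟩ := h1
    rw [← qIntP_mul_X_sub_one, ← qIntP_mul_X_sub_one] at ht
    refine ⟨t, ?_⟩
    have hX : (X - 1 : ℤ[X]) ≠ 0 := by
      intro hc
      have := congrArg (Polynomial.eval 2) hc
      simp at this
    apply mul_right_cancel₀ hX
    rw [ht]; ring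

lemma dvd_X_pow_gcd : ∀ a : ℕ, ∀ b : ℕ, ∀ c : ℤ[X], c ∣ X ^ a - 1 → c ∣ X ^ b - 1 →
    c ∣ X ^ (Nat.gcd a b) - 1 := by
  intro a
  induction a using Nat.strong_induction_on with
  | _ a ih =>
    intro b c ha hb
    rcases Nat.eq_zero_or_pos a with rfl | hpos
    · simpa using hb
    · rw [Nat.gcd_rec]
      apply ih (b % a) (Nat.mod_lt b hpos) a _ _ ha
      have hq : (X : ℤ[X]) ^ a - 1 ∣ (X ^ a) ^ (b / a) - 1 := by
        simpa using sub_dvd_pow_sub_pow ((X : ℤ[X]) ^ a) 1 (b / a)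
      have key : (X : ℤ[X]) ^ b - 1 - X ^ (b % a) * ((X ^ a) ^ (b / a) - 1)
          = X ^ (b % a) - 1 := by
        rw [mul_sub, mul_one, ← pow_mul, ← pow_add]
        rw [Nat.mod_add_div b a]
        ring
      calc c ∣ X ^ b - 1 - X ^ (b % a) * ((X ^ a) ^ (b / a) - 1) :=
            dvd_sub hb (Dvd.dvd.mul_left (dvd_trans ha hq) _)
        _ = X ^ (b % a) - 1 := key

lemma qIntP_eval_one (n : ℕ) : (qIntP n).eval 1 = n := by
  simp [qIntP]

lemma isRelPrime_qIntP {a b : ℕ} (ha : 0 < a) (hcop : Nat.gcd a b = 1) :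
    IsRelPrime (qIntP a) (qIntP b) := by
  intro c hca hcb
  have h1 : c ∣ (X : ℤ[X]) - 1 := by
    have := dvd_X_pow_gcd a b c
      (hca.trans ⟨X - 1, (qIntP_mul_X_sub_one a).symm⟩)
      (hcb.trans ⟨X - 1, (qIntP_mul_X_sub_one b).symm⟩)
    simpa [hcop] using this
  have hc1 : c.eval 1 ≠ 0 := by
    intro h0
    have : (X - C 1 : ℤ[X]) ∣ c := dvd_iff_isRoot.mpr h0
    have hXc : (X - 1 : ℤ[X]) ∣ qIntP a := by
      simpa using this.trans hca
    obtain ⟨s, hs⟩ := hXc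
    have := congrArg (Polynomial.eval 1) hs
    simp [qIntP_eval_one] at this
    omega
  obtain ⟨t, ht⟩ := h1
  have ht1 : t.eval 1 = 0 := by
    have := congrArg (Polynomial.eval 1) ht
    simp at this
    rcases this with h | h
    · exact absurd h hc1
    · exact h
  have : (X - C 1 : ℤ[X]) ∣ t := dvd_iff_isRoot.mpr ht1
  obtain ⟨s, hs⟩ := this
  rw [hs] at ht
  have hX : (X - C 1 : ℤ[X]) ≠ 0 := X_sub_C_ne_zero 1
  have h2 : (X - C 1 : ℤ[X]) * (c * s) = (X - C 1) * 1 := by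
    calc (X - C 1 : ℤ[X]) * (c * s) = c * ((X - C 1) * s) := by ring
      _ = X - 1 := ht.symm
      _ = (X - C 1) * 1 := by simp
  exact IsUnit.of_mul_eq_one s (mul_left_cancel₀ hX h2)

lemma qFactP_succ (n : ℕ) : qFactP (n + 1) = qFactP n * qIntP (n + 1) :=
  Finset.prod_range_succ _ n

lemma qIntP_split {m k : ℕ} (h : k ≤ m) :
    qIntP (m + 1) = qIntP (k + 1) + X ^ (k + 1) * qIntP (m - k) := by
  have hm : m + 1 = (k + 1) + (m - k) := by omega
  rw [qIntP, hm, Finset.sum_range_add]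
  congr 1
  rw [qIntP, Finset.mul_sum]
  exact Finset.sum_congr rfl fun i _ => by rw [← pow_add]

lemma qFactP_dvd : ∀ m k : ℕ, k ≤ m → qFactP k * qFactP (m - k) ∣ qFactP m := by
  intro m
  induction m with
  | zero => intro k hk; interval_cases k; simp [qFactP]
  | succ m ih =>
    intro k hk
    rcases Nat.eq_zero_or_pos k with rfl | hkpos
    · simpa [qFactP] using dvd_rfl
    obtain ⟨j, rfl⟩ := Nat.exists_eq_add_of_le hkpos
    rcases Nat.lt_or_ge j m with hjm | hjm
    · have hj : j ≤ m := le_of_lt hjm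
      have hsplit : qIntP (m + 1) = qIntP (j + 1) + X ^ (j + 1) * qIntP (m - j) :=
        qIntP_split hj
      rw [qFactP_succ, hsplit, mul_add]
      have hsub : m + 1 - (1 + j) = m - j := by omega
      rw [hsub]
      apply dvd_add
      · have h1 := ih j hj
        have : qFactP (1 + j) * qFactP (m - j)
            = (qFactP j * qFactP (m - j)) * qIntP (j + 1) := by
          rw [show 1 + j = j + 1 by omega, qFactP_succ]; ring
        rw [this]
        exact mul_dvd_mul h1 dvd_rfl
      · have h2 := ih (j + 1) hjm
        have hmj : 0 < m - j := by omega
        have : qFactP (m - j) = qFactP (m - (j + 1)) * qIntP (m - j) := by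
          rw [show m - j = (m - (j + 1)) + 1 by omega, qFactP_succ,
            show m - (j+1) + 1 = m - j by omega]
        rw [show 1 + j = j + 1 by omega, this]
        have : qFactP (j + 1) * (qFactP (m - (j + 1)) * qIntP (m - j))
            = (qFactP (j + 1) * qFactP (m - (j + 1))) * qIntP (m - j) := by ring
        rw [this]
        calc (qFactP (j + 1) * qFactP (m - (j + 1))) * qIntP (m - j)
            ∣ qFactP m * qIntP (m - j) := mul_dvd_mul h2 dvd_rfl
          _ ∣ qFactP m * (X ^ (j + 1) * qIntP (m - j)) := ⟨X ^ (j+1), by ring⟩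
    · have hje : 1 + j = m + 1 := by omega
      rw [hje]
      simp [qFactP]

lemma qBinomP_mul {m k : ℕ} (h : k ≤ m) :
    qBinomP m k * (qFactP k * qFactP (m - k)) = qFactP m := by
  rw [qBinomP, if_pos h]
  have hmon : (qFactP k * qFactP (m - k)).Monic := (qFactP_monic k).mul (qFactP_monic _)
  have hdvd := qFactP_dvd m k h
  have hmod : qFactP m %ₘ (qFactP k * qFactP (m - k)) = 0 :=
    (modByMonic_eq_zero_iff_dvd hmon).mpr hdvd
  have h2 := modByMonic_add_div (qFactP m) (qFactP k * qFactP (m - k))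
  rw [hmod, zero_add] at h2
  rw [mul_comm] at h2
  exact h2

/-- The key identity: `[M choose K] ⬝ [K] = [M] ⬝ [M-1 choose K-1]`. -/
lemma qBinomP_key {M K : ℕ} (h1 : 1 ≤ K) (h2 : K ≤ M) :
    qBinomP M K * qIntP K = qIntP M * qBinomP (M - 1) (K - 1) := by
  have hW : (qFactP (K - 1) * qFactP (M - K)).Monic :=
    (qFactP_monic _).mul (qFactP_monic _)
  apply mul_right_cancel₀ hW.ne_zero
  have hKs : K = (K - 1) + 1 := by omega
  have eq1 : qBinomP M K * qIntP K * (qFactP (K - 1) * qFactP (M - K))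
      = qFactP M := by
    have : qIntP K * qFactP (K - 1) = qFactP K := by
      conv_rhs => rw [hKs, qFactP_succ, ← hKs]
      ring
    calc qBinomP M K * qIntP K * (qFactP (K - 1) * qFactP (M - K))
        = qBinomP M K * ((qIntP K * qFactP (K - 1)) * qFactP (M - K)) := by ring
      _ = qBinomP M K * (qFactP K * qFactP (M - K)) := by rw [this]
      _ = qFactP M := qBinomP_mul h2
  have eq2 : qIntP M * qBinomP (M - 1) (K - 1) * (qFactP (K - 1) * qFactP (M - K))
      = qFactP M := by
    have hKM : K - 1 ≤ M - 1 := by omega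
    have hsub : (M - 1) - (K - 1) = M - K := by omega
    have hb := qBinomP_mul hKM
    rw [hsub] at hb
    have hMs : M = (M - 1) + 1 := by omega
    have hMf : qFactP (M - 1) * qIntP M = qFactP M := by
      conv_rhs => rw [hMs, qFactP_succ, ← hMs]
    calc qIntP M * qBinomP (M - 1) (K - 1) * (qFactP (K - 1) * qFactP (M - K))
        = (qBinomP (M - 1) (K - 1) * (qFactP (K - 1) * qFactP (M - K))) * qIntP M := by
          ring
      _ = qFactP (M - 1) * qIntP M := by rw [hb]
      _ = qFactP M := hMf
  rw [eq1, eq2]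

/-- Let `n` be an even positive integer, `r ≥ 1`, and `d = gcd(n, r)`. Then
`[2d]_q` divides the Gaussian binomial `[2n−2r choose n−1]_q` in `ℤ[q]`
(which is `0`, making the divisibility trivial, when `n−1 > 2n−2r`). -/
theorem qIntP_two_gcd_dvd_qBinomP (n r : ℕ) (hn : 0 < n) (heven : Even n) (hr : 1 ≤ r) :
    qIntP (2 * Nat.gcd n r) ∣ qBinomP (2 * n - 2 * r) (n - 1) := by
  obtain ⟨t, ht⟩ := heven
  set d := Nat.gcd n r with hd
  by_cases hMK : n - 1 ≤ 2 * n - 2 * r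
  · have hn2 : 2 ≤ n := by omega
    have hrn : 2 * r ≤ n := by omega
    set M := 2 * n - 2 * r with hM
    set K := n - 1 with hK
    have hK1 : 1 ≤ K := by omega
    -- [2d] ∣ [M]
    have hdn : d ∣ n := Nat.gcd_dvd_left n r
    have hdr : d ∣ r := Nat.gcd_dvd_right n r
    have hdvdM : 2 * d ∣ M := by
      have hnr : d ∣ n - r := Nat.dvd_sub hdn hdr
      have : M = 2 * (n - r) := by omega
      rw [this]
      exact mul_dvd_mul_left 2 hnr
    have h1 : qIntP (2 * d) ∣ qIntP M := qIntP_dvd hdvdM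
    -- coprimality
    have hdpos : 0 < d := Nat.gcd_pos_of_pos_left r hn
    have hcop : Nat.gcd (2 * d) K = 1 := by
      have hc2 : Nat.Coprime 2 K := by
        rw [Nat.coprime_two_left]
        exact ⟨t - 1, by omega⟩
      have hcd : Nat.Coprime d K := by
        have hg1 : Nat.gcd d K ∣ n := (Nat.gcd_dvd_left d K).trans hdn
        have hg2 : Nat.gcd d K ∣ K := Nat.gcd_dvd_right d K
        have : Nat.gcd d K ∣ 1 := by
          have := Nat.dvd_sub hg1 hg2
          simpa [hK, show n - (n - 1) = 1 by omega] using this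
        exact Nat.dvd_one.mp this
      exact Nat.Coprime.mul hc2 hcd
    have hrel : IsRelPrime (qIntP (2 * d)) (qIntP K) :=
      isRelPrime_qIntP (by omega) hcop
    -- main divisibility
    have hid := qBinomP_key hK1 hMK
    have h2 : qIntP (2 * d) ∣ qBinomP M K * qIntP K := by
      rw [hid]
      exact h1.trans (dvd_mul_right _ _)
    exact hrel.dvd_of_dvd_mul_right h2
  · rw [qBinomP, if_neg hMK]
    exact dvd_zero _
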